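/- Let H ∈ (1/2, 1). Then f_H(x) is asymptotically equivalent to 2(2H−1) x^{2H−2} as x → +∞; that is, f_H(x)/(2(2H−1) x^{2H−2}) → 1 as x → +∞. -/

import Mathlib

open MeasureTheory Real Filter Finset
open Set

lemma intInt_exp_rpow {β : ℝ} (hβ : -1 < β) (a b : ℝ) :
    IntervalIntegrable (fun s => Real.exp s * s ^ β) volume a b :=
  (intervalIntegral.intervalIntegrable_rpow' hβ).continuousOn_mul
    Real.continuous_exp.continuousOn

lemma tendstoB {β : ℝ} (hβ1 : -1 < β) (hβ0 : β < 0) :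
    Tendsto (fun x => Real.exp (-x) * (∫ s in (0:ℝ)..x, Real.exp s * s ^ β) / x ^ β)
      atTop (nhds 1) := by
  have hb1 : (0:ℝ) < β + 1 := by linarith
  have hsqrt : Tendsto Real.sqrt atTop atTop := by
    rw [show Real.sqrt = fun x : ℝ => x ^ ((1:ℝ)/2) from funext Real.sqrt_eq_rpow]
    exact tendsto_rpow_atTop (by norm_num)
  -- limit of lower bound
  have hL : Tendsto (fun x : ℝ => 1 - Real.exp (-x)) atTop (nhds 1) := by
    simpa using tendsto_const_nhds.sub Real.tendsto_exp_neg_atTop_nhds_zero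
  -- limit of upper bound
  have hU1 : Tendsto (fun x : ℝ => Real.exp (-Real.sqrt x) * x) atTop (nhds 0) := by
    have h2 := (tendsto_rpow_mul_exp_neg_mul_atTop_nhds_zero 2 1 one_pos).comp hsqrt
    apply h2.congr'
    filter_upwards [eventually_ge_atTop (0:ℝ)] with x hx
    simp only [Function.comp_apply]
    rw [show ((2:ℝ)) = ((2:ℕ):ℝ) by norm_num, Real.rpow_natCast, sq, Real.mul_self_sqrt hx,
      neg_one_mul]
    ring
  have hU2 : Tendsto (fun x : ℝ => (1 - x ^ (-(1/2):ℝ)) ^ β) atTop (nhds 1) := by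
    have hin : Tendsto (fun x : ℝ => 1 - x ^ (-(1/2):ℝ)) atTop (nhds 1) := by
      simpa using tendsto_const_nhds.sub (tendsto_rpow_neg_atTop (by norm_num : (0:ℝ) < 1/2))
    have hc : ContinuousAt (fun t : ℝ => t ^ β) 1 :=
      Real.continuousAt_rpow_const 1 β (Or.inl one_ne_zero)
    simpa [Real.one_rpow, Function.comp_def] using hc.tendsto.comp hin
  have hU : Tendsto (fun x : ℝ => Real.exp (-Real.sqrt x) * x / (β + 1)
      + (1 - x ^ (-(1/2):ℝ)) ^ β) atTop (nhds 1) := by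
    simpa using (hU1.div_const (β + 1)).add hU2
  refine tendsto_of_tendsto_of_tendsto_of_le_of_le' hL hU ?_ ?_
  · -- lower bound
    filter_upwards [eventually_ge_atTop (4:ℝ)] with x hx4
    have hx0 : (0:ℝ) < x := by linarith
    have hxb : 0 < x ^ β := Real.rpow_pos_of_pos hx0 β
    have key : x ^ β * (Real.exp x - 1) ≤ ∫ s in Ioc (0:ℝ) x, Real.exp s * s ^ β := by
      have h1 : ∫ s in Ioc (0:ℝ) x, Real.exp s * x ^ β = (Real.exp x - 1) * x ^ β := by
        rw [integral_mul_const, ← intervalIntegral.integral_of_le hx0.le,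
          integral_exp]
        simp
      calc x ^ β * (Real.exp x - 1) = ∫ s in Ioc (0:ℝ) x, Real.exp s * x ^ β := by
            rw [h1]; ring
        _ ≤ _ := by
            refine setIntegral_mono_on
              ((Real.continuous_exp.mul continuous_const).integrableOn_Ioc)
              ((intInt_exp_rpow hβ1 0 x).1) measurableSet_Ioc ?_
            intro s hs
            exact mul_le_mul_of_nonneg_left
              (Real.rpow_le_rpow_of_nonpos hs.1 hs.2 hβ0.le) (Real.exp_nonneg s)
    rw [intervalIntegral.integral_of_le hx0.le, le_div_iff₀ hxb]
    have hExp : Real.exp (-x) * Real.exp x = 1 := by rw [← Real.exp_add]; simp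
    have heq : Real.exp (-x) * (x ^ β * (Real.exp x - 1)) = (1 - Real.exp (-x)) * x ^ β := by
      linear_combination x ^ β * hExp
    calc (1 - Real.exp (-x)) * x ^ β
        = Real.exp (-x) * (x ^ β * (Real.exp x - 1)) := heq.symm
      _ ≤ Real.exp (-x) * ∫ s in Ioc (0:ℝ) x, Real.exp s * s ^ β :=
          mul_le_mul_of_nonneg_left key (Real.exp_pos (-x)).le
  · -- upper bound
    filter_upwards [eventually_ge_atTop (4:ℝ)] with x hx4
    have hx0 : (0:ℝ) < x := by linarith
    have hxb : 0 < x ^ β := Real.rpow_pos_of_pos hx0 β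
    have hs2 : (2:ℝ) ≤ Real.sqrt x := by
      rw [show (2:ℝ) = Real.sqrt 4 by
        rw [show (4:ℝ) = 2 ^ 2 by norm_num, Real.sqrt_sq (by norm_num : (0:ℝ) ≤ 2)]]
      exact Real.sqrt_le_sqrt hx4
    have hxsq : Real.sqrt x * Real.sqrt x = x := Real.mul_self_sqrt hx0.le
    set y := x - Real.sqrt x with hy_def
    have hy0 : 0 < y := by nlinarith [Real.sqrt_nonneg x]
    have hyx : y ≤ x := by nlinarith [Real.sqrt_nonneg x]
    have hyb : 0 < y ^ β := Real.rpow_pos_of_pos hy0 β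
    -- split the integral
    have hsplit : (∫ s in (0:ℝ)..x, Real.exp s * s ^ β)
        = (∫ s in (0:ℝ)..y, Real.exp s * s ^ β) + ∫ s in y..x, Real.exp s * s ^ β :=
      (intervalIntegral.integral_add_adjacent_intervals
        (intInt_exp_rpow hβ1 0 y) (intInt_exp_rpow hβ1 y x)).symm
    have bound1 : (∫ s in (0:ℝ)..y, Real.exp s * s ^ β)
        ≤ Real.exp y * (y ^ (β + 1) / (β + 1)) := by
      rw [intervalIntegral.integral_of_le hy0.le]
      have h2 : ∫ s in Ioc (0:ℝ) y, Real.exp y * s ^ β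
          = Real.exp y * (y ^ (β + 1) / (β + 1)) := by
        rw [integral_const_mul]
        congr 1
        rw [← intervalIntegral.integral_of_le hy0.le,
          integral_rpow (Or.inl hβ1), Real.zero_rpow (by linarith : β + 1 ≠ 0)]
        ring
      rw [← h2]
      refine setIntegral_mono_on ((intInt_exp_rpow hβ1 0 y).1)
        (((intervalIntegral.intervalIntegrable_rpow' hβ1 (a := 0) (b := y)).1).const_mul _)
        measurableSet_Ioc ?_
      intro s hs
      exact mul_le_mul_of_nonneg_right (Real.exp_le_exp.2 hs.2)
        (Real.rpow_nonneg hs.1.le β)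
    have bound2 : (∫ s in y..x, Real.exp s * s ^ β) ≤ y ^ β * Real.exp x := by
      rw [intervalIntegral.integral_of_le hyx]
      have h3 : ∫ s in Ioc y x, Real.exp s * y ^ β = (Real.exp x - Real.exp y) * y ^ β := by
        rw [integral_mul_const, ← intervalIntegral.integral_of_le hyx,
          integral_exp]
      calc (∫ s in Ioc y x, Real.exp s * s ^ β)
          ≤ ∫ s in Ioc y x, Real.exp s * y ^ β := by
            refine setIntegral_mono_on ((intInt_exp_rpow hβ1 y x).1)
              ((Real.continuous_exp.mul continuous_const).integrableOn_Ioc)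
              measurableSet_Ioc ?_
            intro s hs
            exact mul_le_mul_of_nonneg_left
              (Real.rpow_le_rpow_of_nonpos hy0 hs.1.le hβ0.le) (Real.exp_nonneg s)
        _ = (Real.exp x - Real.exp y) * y ^ β := h3
        _ ≤ y ^ β * Real.exp x := by nlinarith [Real.exp_pos y]
    -- algebraic identities
    have hA : Real.exp (-x) * Real.exp y = Real.exp (-Real.sqrt x) := by
      rw [← Real.exp_add]; congr 1; rw [hy_def]; ring
    have hExp : Real.exp (-x) * Real.exp x = 1 := by rw [← Real.exp_add]; simp
    have hyb1 : y ^ (β + 1) ≤ x ^ (β + 1) := Real.rpow_le_rpow hy0.le hyx (by linarith)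
    have hxb1 : x ^ (β + 1) = x * x ^ β := by
      rw [Real.rpow_add hx0, Real.rpow_one]; ring
    have hhalf : x ^ (-(1/2):ℝ) * x = Real.sqrt x := by
      rw [show x ^ (-(1/2):ℝ) * x = x ^ ((-(1/2):ℝ) + 1) by
        rw [Real.rpow_add_one hx0.ne'], Real.sqrt_eq_rpow]
      norm_num
    have hyβ : y ^ β = (1 - x ^ (-(1/2):ℝ)) ^ β * x ^ β := by
      rw [← Real.mul_rpow ?_ hx0.le]
      · congr 1
        rw [hy_def]
        have hcomp : (1 - x ^ (-(1/2):ℝ)) * x = x - Real.sqrt x := by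
          rw [sub_mul, one_mul, hhalf]
        rw [hcomp]
      · have h1 : x ^ (-(1/2):ℝ) ≤ 1 :=
          Real.rpow_le_one_of_one_le_of_nonpos (by linarith) (by norm_num)
        linarith
    rw [div_le_iff₀ hxb, hsplit, mul_add]
    have step1 : Real.exp (-x) * (∫ s in (0:ℝ)..y, Real.exp s * s ^ β)
          + Real.exp (-x) * ∫ s in y..x, Real.exp s * s ^ β
        ≤ Real.exp (-x) * (Real.exp y * (y ^ (β + 1) / (β + 1)))
          + Real.exp (-x) * (y ^ β * Real.exp x) :=
      add_le_add (mul_le_mul_of_nonneg_left bound1 (Real.exp_pos (-x)).le)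
        (mul_le_mul_of_nonneg_left bound2 (Real.exp_pos (-x)).le)
    refine step1.trans ?_
    have e1 : Real.exp (-x) * (Real.exp y * (y ^ (β + 1) / (β + 1)))
        = Real.exp (-Real.sqrt x) * (y ^ (β + 1) / (β + 1)) := by
      rw [← hA]; ring
    have e2 : Real.exp (-x) * (y ^ β * Real.exp x) = y ^ β := by
      linear_combination y ^ β * hExp
    rw [e1, e2, hyβ]
    have e3 : Real.exp (-Real.sqrt x) * (y ^ (β + 1) / (β + 1))
        ≤ Real.exp (-Real.sqrt x) * x / (β + 1) * x ^ β := by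
      rw [show Real.exp (-Real.sqrt x) * x / (β + 1) * x ^ β
          = Real.exp (-Real.sqrt x) * (x ^ (β + 1) / (β + 1)) by rw [hxb1]; ring]
      have hdiv : y ^ (β + 1) / (β + 1) ≤ x ^ (β + 1) / (β + 1) := by gcongr
      exact mul_le_mul_of_nonneg_left hdiv (Real.exp_pos _).le
    linarith [e3]

lemma intOn_exp_neg_rpow {β : ℝ} (hβ : -1 < β) {x : ℝ} (hx : 0 ≤ x) :
    IntegrableOn (fun s => Real.exp (-s) * s ^ β) (Set.Ioi x) := by
  have h := Real.GammaIntegral_convergent (by linarith : (0:ℝ) < β + 1)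
  simpa using h.mono_set (Set.Ioi_subset_Ioi hx)

lemma hexpint (a b : ℝ) : ∫ s in a..b, Real.exp (-s) = Real.exp (-a) - Real.exp (-b) := by
  have hd : ∀ s : ℝ, HasDerivAt (fun t => -Real.exp (-t)) (Real.exp (-s)) s := by
    intro s
    exact ((Real.hasDerivAt_exp (-s)).comp s (hasDerivAt_neg s)).neg.congr_deriv (by simp)
  rw [intervalIntegral.integral_eq_sub_of_hasDerivAt (fun s _ => hd s)
    ((by fun_prop : Continuous fun s : ℝ => Real.exp (-s)).intervalIntegrable a b)]
  ring

lemma tendstoA {β : ℝ} (hβ1 : -1 < β) (hβ0 : β < 0) :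
    Tendsto (fun x => Real.exp x * (∫ s in Ioi x, Real.exp (-s) * s ^ β) / x ^ β)
      atTop (nhds 1) := by
  have hsqrt : Tendsto Real.sqrt atTop atTop := by
    rw [show Real.sqrt = fun x : ℝ => x ^ ((1:ℝ)/2) from funext Real.sqrt_eq_rpow]
    exact tendsto_rpow_atTop (by norm_num)
  have hL : Tendsto (fun x : ℝ => (1 + x ^ (-(1/2):ℝ)) ^ β * (1 - Real.exp (-Real.sqrt x)))
      atTop (nhds 1) := by
    have h1 : Tendsto (fun x : ℝ => (1 + x ^ (-(1/2):ℝ)) ^ β) atTop (nhds 1) := by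
      have hin : Tendsto (fun x : ℝ => 1 + x ^ (-(1/2):ℝ)) atTop (nhds 1) := by
        simpa using tendsto_const_nhds.add (tendsto_rpow_neg_atTop (by norm_num : (0:ℝ) < 1/2))
      have hc : ContinuousAt (fun t : ℝ => t ^ β) 1 :=
        Real.continuousAt_rpow_const 1 β (Or.inl one_ne_zero)
      simpa [Real.one_rpow, Function.comp_def] using hc.tendsto.comp hin
    have h2 : Tendsto (fun x : ℝ => 1 - Real.exp (-Real.sqrt x)) atTop (nhds 1) := by
      simpa using tendsto_const_nhds.sub
        (Real.tendsto_exp_neg_atTop_nhds_zero.comp hsqrt)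
    simpa using h1.mul h2
  refine tendsto_of_tendsto_of_tendsto_of_le_of_le' hL tendsto_const_nhds ?_ ?_
  · -- lower bound
    filter_upwards [eventually_ge_atTop (1:ℝ)] with x hx1
    have hx0 : (0:ℝ) < x := by linarith
    have hxb : 0 < x ^ β := Real.rpow_pos_of_pos hx0 β
    have hsx0 : 0 < Real.sqrt x := Real.sqrt_pos.2 hx0
    set z := x + Real.sqrt x with hz_def
    have hxz : x ≤ z := by simp [hz_def, Real.sqrt_nonneg x]
    have hz0 : 0 < z := by linarith
    have intOn := intOn_exp_neg_rpow hβ1 hx0.le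
    have step2 : (Real.exp (-x) - Real.exp (-z)) * z ^ β
        ≤ ∫ s in Ioc x z, Real.exp (-s) * s ^ β := by
      have h3 : ∫ s in Ioc x z, Real.exp (-s) * z ^ β
          = (Real.exp (-x) - Real.exp (-z)) * z ^ β := by
        rw [integral_mul_const, ← intervalIntegral.integral_of_le hxz, hexpint]
      rw [← h3]
      refine setIntegral_mono_on
        (((Real.continuous_exp.comp continuous_neg).mul continuous_const).integrableOn_Ioc)
        (intOn.mono_set Ioc_subset_Ioi_self) measurableSet_Ioc ?_
      intro s hs
      exact mul_le_mul_of_nonneg_left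
        (Real.rpow_le_rpow_of_nonpos (hx0.trans hs.1) hs.2 hβ0.le)
        (Real.exp_nonneg _)
    have step1 : (∫ s in Ioc x z, Real.exp (-s) * s ^ β)
        ≤ ∫ s in Ioi x, Real.exp (-s) * s ^ β := by
      refine setIntegral_mono_set intOn ?_ (HasSubset.Subset.eventuallyLE Ioc_subset_Ioi_self)
      refine (ae_restrict_iff' measurableSet_Ioi).2 (ae_of_all _ fun s hs => ?_)
      exact mul_nonneg (Real.exp_nonneg _) (Real.rpow_nonneg (hx0.trans hs).le β)
    rw [le_div_iff₀ hxb]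
    have hhalf : x ^ (-(1/2):ℝ) * x = Real.sqrt x := by
      rw [show x ^ (-(1/2):ℝ) * x = x ^ ((-(1/2):ℝ) + 1) by
        rw [Real.rpow_add_one hx0.ne'], Real.sqrt_eq_rpow]
      norm_num
    have hzβ : (1 + x ^ (-(1/2):ℝ)) ^ β * x ^ β = z ^ β := by
      rw [← Real.mul_rpow ?_ hx0.le]
      · congr 1
        rw [add_mul, one_mul, hhalf, hz_def]
      · have : 0 ≤ x ^ (-(1/2):ℝ) := Real.rpow_nonneg hx0.le _
        linarith
    have hExp : Real.exp x * Real.exp (-x) = 1 := by rw [← Real.exp_add]; simp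
    have hExp2 : Real.exp x * Real.exp (-z) = Real.exp (-Real.sqrt x) := by
      rw [← Real.exp_add]; congr 1; rw [hz_def]; ring
    have key : Real.exp x * ((Real.exp (-x) - Real.exp (-z)) * z ^ β)
        = (1 + x ^ (-(1/2):ℝ)) ^ β * (1 - Real.exp (-Real.sqrt x)) * x ^ β := by
      have : (1 + x ^ (-(1/2):ℝ)) ^ β * (1 - Real.exp (-Real.sqrt x)) * x ^ β
          = z ^ β * (1 - Real.exp (-Real.sqrt x)) := by
        rw [show (1 + x ^ (-(1/2):ℝ)) ^ β * (1 - Real.exp (-Real.sqrt x)) * x ^ β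
          = (1 + x ^ (-(1/2):ℝ)) ^ β * x ^ β * (1 - Real.exp (-Real.sqrt x)) by ring, hzβ]
      rw [this]
      linear_combination (z ^ β * hExp - z ^ β * hExp2)
    calc (1 + x ^ (-(1/2):ℝ)) ^ β * (1 - Real.exp (-Real.sqrt x)) * x ^ β
        = Real.exp x * ((Real.exp (-x) - Real.exp (-z)) * z ^ β) := key.symm
      _ ≤ Real.exp x * ∫ s in Ioi x, Real.exp (-s) * s ^ β :=
          mul_le_mul_of_nonneg_left (step2.trans step1) (Real.exp_pos x).le
  · -- upper bound
    filter_upwards [eventually_ge_atTop (1:ℝ)] with x hx1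
    have hx0 : (0:ℝ) < x := by linarith
    have hxb : 0 < x ^ β := Real.rpow_pos_of_pos hx0 β
    have intOn := intOn_exp_neg_rpow hβ1 hx0.le
    rw [div_le_one hxb]
    have mono : (∫ s in Ioi x, Real.exp (-s) * s ^ β)
        ≤ ∫ s in Ioi x, Real.exp (-s) * x ^ β := by
      have hint2 : IntegrableOn (fun s : ℝ => Real.exp (-s) * x ^ β) (Ioi x) := by
        have h := (exp_neg_integrableOn_Ioi x (by norm_num : (0:ℝ) < 1)).mul_const (x ^ β)
        simpa [neg_one_mul, IntegrableOn] using h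
      refine setIntegral_mono_on intOn hint2 measurableSet_Ioi ?_
      · intro s hs
        exact mul_le_mul_of_nonneg_left
          (Real.rpow_le_rpow_of_nonpos hx0 hs.le hβ0.le) (Real.exp_nonneg _)
    have hval : ∫ s in Ioi x, Real.exp (-s) * x ^ β = Real.exp (-x) * x ^ β := by
      rw [integral_mul_const, integral_exp_neg_Ioi]
    have hExp : Real.exp x * Real.exp (-x) = 1 := by rw [← Real.exp_add]; simp
    calc Real.exp x * ∫ s in Ioi x, Real.exp (-s) * s ^ β
        ≤ Real.exp x * (Real.exp (-x) * x ^ β) := by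
          rw [← hval]; exact mul_le_mul_of_nonneg_left mono (Real.exp_pos x).le
      _ = x ^ β := by linear_combination x ^ β * hExp

lemma ibp_finite {α : ℝ} (hα0 : 0 < α) (hα1 : α < 1) {x : ℝ} (hx : 0 ≤ x) :
    ∫ s in (0:ℝ)..x, Real.exp s * s ^ α
      = Real.exp x * x ^ α - α * ∫ s in (0:ℝ)..x, Real.exp s * s ^ (α - 1) := by
  have h1 : (-1:ℝ) < α := by linarith
  have h2 : (-1:ℝ) < α - 1 := by linarith
  set g' : ℝ → ℝ := fun s => Real.exp s * s ^ α + α * (Real.exp s * s ^ (α - 1)) with hg'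
  have hcont : ContinuousOn (fun s : ℝ => Real.exp s * s ^ α) (Set.Icc 0 x) := by
    intro s _
    exact (Real.continuous_exp.continuousAt.mul
      (Real.continuousAt_rpow_const s α (Or.inr hα0.le))).continuousWithinAt
  have hderiv : ∀ s ∈ Set.Ioo (0:ℝ) x,
      HasDerivWithinAt (fun s : ℝ => Real.exp s * s ^ α) (g' s) (Set.Ioi s) s := by
    intro s hs
    have h := (Real.hasDerivAt_exp s).mul (Real.hasDerivAt_rpow_const (p := α) (Or.inl hs.1.ne'))
    have h' : HasDerivAt (fun s : ℝ => Real.exp s * s ^ α) (g' s) s := by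
      exact h.congr_deriv (by simp only [hg']; ring)
    exact h'.hasDerivWithinAt
  have hint : IntervalIntegrable g' volume 0 x :=
    (intInt_exp_rpow h1 0 x).add ((intInt_exp_rpow h2 0 x).const_mul α)
  have key := intervalIntegral.integral_eq_sub_of_hasDeriv_right_of_le hx hcont hderiv hint
  rw [Real.zero_rpow hα0.ne', mul_zero, sub_zero] at key
  have hsplit : ∫ s in (0:ℝ)..x, g' s
      = (∫ s in (0:ℝ)..x, Real.exp s * s ^ α)
        + α * ∫ s in (0:ℝ)..x, Real.exp s * s ^ (α - 1) := by
    rw [hg']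
    rw [intervalIntegral.integral_add (intInt_exp_rpow h1 0 x)
      ((intInt_exp_rpow h2 0 x).const_mul α), intervalIntegral.integral_const_mul]
  rw [hsplit] at key
  linarith

lemma ibp_infinite {α : ℝ} (hα0 : 0 < α) (hα1 : α < 1) {x : ℝ} (hx : 0 < x) :
    ∫ s in Set.Ioi x, Real.exp (-s) * s ^ α
      = Real.exp (-x) * x ^ α + α * ∫ s in Set.Ioi x, Real.exp (-s) * s ^ (α - 1) := by
  have h1 : (-1:ℝ) < α := by linarith
  have h2 : (-1:ℝ) < α - 1 := by linarith
  set f : ℝ → ℝ := fun s => -(Real.exp (-s) * s ^ α) with hf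
  set f' : ℝ → ℝ := fun s => Real.exp (-s) * s ^ α - α * (Real.exp (-s) * s ^ (α - 1)) with hf'
  have hderiv : ∀ s ∈ Set.Ici x, HasDerivAt f (f' s) s := by
    intro s hs
    have hs0 : 0 < s := lt_of_lt_of_le hx hs
    have he : HasDerivAt (fun t : ℝ => Real.exp (-t)) (Real.exp (-s) * (-1)) s :=
      (Real.hasDerivAt_exp (-s)).comp s (hasDerivAt_neg s)
    have h := (he.mul (Real.hasDerivAt_rpow_const (p := α) (Or.inl hs0.ne'))).neg
    exact h.congr_deriv (by simp only [hf']; ring)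
  have hint : IntegrableOn f' (Set.Ioi x) :=
    (intOn_exp_neg_rpow h1 hx.le).sub ((intOn_exp_neg_rpow h2 hx.le).const_mul α)
  have htend : Tendsto f atTop (nhds 0) := by
    have h := (tendsto_rpow_mul_exp_neg_mul_atTop_nhds_zero α 1 one_pos).neg
    rw [neg_zero] at h
    apply h.congr'
    filter_upwards [eventually_ge_atTop (0:ℝ)] with s _
    rw [hf]
    simp only [neg_one_mul]
    ring
  have key := integral_Ioi_of_hasDerivAt_of_tendsto' hderiv hint htend
  have hfx : f x = -(Real.exp (-x) * x ^ α) := rfl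
  rw [hfx] at key
  have hsplit : ∫ s in Set.Ioi x, f' s
      = (∫ s in Set.Ioi x, Real.exp (-s) * s ^ α)
        - α * ∫ s in Set.Ioi x, Real.exp (-s) * s ^ (α - 1) := by
    rw [hf']
    rw [integral_sub (intOn_exp_neg_rpow h1 hx.le)
      ((intOn_exp_neg_rpow h2 hx.le).const_mul α), integral_const_mul]
  rw [hsplit] at key
  linarith

lemma gamma_tail {a : ℝ} (ha : 0 < a) {x : ℝ} (hx : 0 ≤ x) :
    Real.Gamma a - (∫ s in (0:ℝ)..x, Real.exp (-s) * s ^ (a - 1))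
      = ∫ s in Set.Ioi x, Real.exp (-s) * s ^ (a - 1) := by
  have hG := Real.Gamma_eq_integral ha
  have hunion : Set.Ioc (0:ℝ) x ∪ Set.Ioi x = Set.Ioi 0 := Set.Ioc_union_Ioi_eq_Ioi hx
  have hdisj : Disjoint (Set.Ioc (0:ℝ) x) (Set.Ioi x) := Set.Ioc_disjoint_Ioi le_rfl
  have hi1 : IntegrableOn (fun s => Real.exp (-s) * s ^ (a - 1)) (Set.Ioc 0 x) :=
    (Real.GammaIntegral_convergent ha).mono_set Set.Ioc_subset_Ioi_self
  have hi2 : IntegrableOn (fun s => Real.exp (-s) * s ^ (a - 1)) (Set.Ioi x) :=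
    (Real.GammaIntegral_convergent ha).mono_set (Set.Ioi_subset_Ioi hx)
  have := setIntegral_union hdisj measurableSet_Ioi hi1 hi2
  rw [hunion] at this
  rw [hG, this, intervalIntegral.integral_of_le hx]
  ring


/-- `f_H^{(1)}(x) = e^{-x}(Γ(2H) − ∫_0^x e^s s^{2H−1} ds)`. -/
noncomputable def fH1 (H x : ℝ) : ℝ :=
  Real.exp (-x) * (Real.Gamma (2 * H) - ∫ s in (0:ℝ)..x, Real.exp s * s ^ (2 * H - 1))

/-- `f_H^{(2)}(x) = e^{x}(Γ(2H) − ∫_0^x e^{−s} s^{2H−1} ds)`. -/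
noncomputable def fH2 (H x : ℝ) : ℝ :=
  Real.exp x * (Real.Gamma (2 * H) - ∫ s in (0:ℝ)..x, Real.exp (-s) * s ^ (2 * H - 1))

/-- `f_H = f_H^{(1)} + f_H^{(2)}`. -/
noncomputable def fH (H x : ℝ) : ℝ := fH1 H x + fH2 H x

theorem stmt_2 (H : ℝ) (hH : H ∈ Set.Ioo (1/2 : ℝ) 1) :
    Filter.Tendsto (fun x : ℝ => fH H x / (2 * (2 * H - 1) * x ^ (2 * H - 2)))
      Filter.atTop (nhds 1) := by
  obtain ⟨hH1, hH2⟩ := hH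
  set α : ℝ := 2 * H - 1 with hα
  have hα0 : 0 < α := by rw [hα]; linarith
  have hα1 : α < 1 := by rw [hα]; linarith
  have hβ1 : (-1:ℝ) < α - 1 := by linarith
  have hβ0 : α - 1 < 0 := by linarith
  have t1 : Tendsto (fun x : ℝ => x ^ (-(α-1)) * Real.exp (-x)) atTop (nhds 0) := by
    have h := tendsto_rpow_mul_exp_neg_mul_atTop_nhds_zero (-(α-1)) 1 one_pos
    simpa [neg_one_mul] using h
  have t2 := tendstoB hβ1 hβ0
  have t3 := tendstoA hβ1 hβ0
  have tg := (t1.const_mul (Real.Gamma (2*H)/(2*α))).add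
      ((t2.const_mul (1/2:ℝ)).add (t3.const_mul (1/2:ℝ)))
  have hval : Real.Gamma (2*H)/(2*α) * 0 + ((1/2:ℝ)*1 + (1/2:ℝ)*1) = 1 := by norm_num
  rw [hval] at tg
  apply tg.congr'
  filter_upwards [eventually_gt_atTop (0:ℝ)] with x hx
  have hxb : (0:ℝ) < x ^ (α - 1) := Real.rpow_pos_of_pos hx _
  have hExp : Real.exp (-x) * Real.exp x = 1 := by rw [← Real.exp_add]; simp
  have hfin := ibp_finite hα0 hα1 hx.le
  have hg : Real.Gamma (2*H) - (∫ s in (0:ℝ)..x, Real.exp (-s) * s ^ α)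
      = ∫ s in Set.Ioi x, Real.exp (-s) * s ^ α := by
    have h2H : (0:ℝ) < 2 * H := by linarith
    have := gamma_tail h2H hx.le
    simpa [show 2 * H - 1 = α from hα.symm] using this
  have hinf := ibp_infinite hα0 hα1 hx
  have hfH : fH H x = Real.exp (-x) * Real.Gamma (2*H)
      + α * (Real.exp (-x) * ∫ s in (0:ℝ)..x, Real.exp s * s ^ (α - 1))
      + α * (Real.exp x * ∫ s in Set.Ioi x, Real.exp (-s) * s ^ (α - 1)) := by
    simp only [fH, fH1, fH2]
    rw [show (2 * H - 1 : ℝ) = α from hα.symm]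
    rw [hfin, hg, hinf]
    have h1 : Real.exp x * Real.exp (-x) = 1 := by rw [← Real.exp_add]; simp
    linear_combination (- (x ^ α) * hExp + x ^ α * h1)
  have h22 : (2:ℝ) * H - 2 = α - 1 := by rw [hα]; ring
  rw [h22, hfH]
  have hinv : x ^ (-(α-1)) = (x ^ (α-1))⁻¹ := Real.rpow_neg hx.le _
  rw [hinv]
  field_simp
  ring
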